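/- Define GBCVI_n(k) as in the generalized Dirichlet BCVI. Suppose g(n)/n → ∞, α_k(n)/g(n) → c_k > 0, and β_k(n)/g(n) → d_k > 0 as n → ∞. Then for k = 2,...,K-1, lim_{n→∞} GBCVI_n(k) = (c_k/(c_k+d_k)) ∏_{i=2}^{k-1} d_i/(c_i+d_i), and lim_{n→∞} GBCVI_n(K) = ∏_{k=2}^{K-1} d_k/(c_k+d_k). -/

import Mathlib

open Finset Filter Topology

private lemma gd_aux (a b g : ℕ → ℝ) (hg : ∀ n, 0 < g n) (la lb : ℝ)
    (hla : Tendsto (fun n => a n / g n) atTop (𝓝 la))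
    (hlb : Tendsto (fun n => b n / g n) atTop (𝓝 lb))
    (hlb0 : lb ≠ 0) (S T : ℝ)
    (hng : Tendsto (fun n : ℕ => (n : ℝ) / g n) atTop (𝓝 0)) :
    Tendsto (fun n : ℕ => (a n + n * S) / (b n + n * T)) atTop (𝓝 (la / lb)) := by
  have h1 : Tendsto (fun n : ℕ => a n / g n + (n / g n) * S) atTop (𝓝 (la + 0 * S)) :=
    hla.add (hng.mul_const S)
  have h2 : Tendsto (fun n : ℕ => b n / g n + (n / g n) * T) atTop (𝓝 (lb + 0 * T)) :=
    hlb.add (hng.mul_const T)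
  have h3 := h1.div h2 (by simpa using hlb0)
  rw [zero_mul, add_zero, zero_mul, add_zero] at h3
  refine h3.congr fun n => ?_
  have hgn := (hg n).ne'
  simp only [Pi.div_apply]
  field_simp

/-- If `g(n)/n → ∞`, `α_k(n)/g(n) → c_k > 0` and `β_k(n)/g(n) → d_k > 0`, then for
`k = 2, …, K-1`, `GBCVI_n(k) → (c_k/(c_k+d_k)) ∏_{i<k} d_i/(c_i+d_i)` and
`GBCVI_n(K) → ∏_{k=2}^{K-1} d_k/(c_k+d_k)`. -/
theorem gd_bcvi_limit_large_params
    (K : ℕ) (hK : 3 ≤ K) (α β : ℕ → ℕ → ℝ) (r c d : ℕ → ℝ) (g : ℕ → ℝ)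
    (hα : ∀ n, ∀ k ∈ Finset.Icc 2 (K - 1), 0 < α n k)
    (hβ : ∀ n, ∀ k ∈ Finset.Icc 2 (K - 1), 0 < β n k)
    (hr : ∀ k ∈ Finset.Icc 2 K, 0 ≤ r k)
    (hrsum : ∑ k ∈ Finset.Icc 2 K, r k = 1)
    (hg : ∀ n, 0 < g n)
    (hgn : Tendsto (fun n : ℕ => g n / n) atTop atTop)
    (hc : ∀ k ∈ Finset.Icc 2 (K - 1), 0 < c k)
    (hd : ∀ k ∈ Finset.Icc 2 (K - 1), 0 < d k)
    (hclim : ∀ k ∈ Finset.Icc 2 (K - 1),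
      Tendsto (fun n : ℕ => α n k / g n) atTop (𝓝 (c k)))
    (hdlim : ∀ k ∈ Finset.Icc 2 (K - 1),
      Tendsto (fun n : ℕ => β n k / g n) atTop (𝓝 (d k))) :
    (∀ k ∈ Finset.Icc 2 (K - 1),
      Tendsto (fun n : ℕ =>
          (α n k + n * r k) / (α n k + β n k + n * ∑ i ∈ Finset.Icc k K, r i) *
          ∏ i ∈ Finset.Icc 2 (k - 1),
            (β n i + n * ∑ j ∈ Finset.Icc (i + 1) K, r j) /
            (α n i + β n i + n * ∑ j ∈ Finset.Icc i K, r j))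
        atTop (𝓝 (c k / (c k + d k) *
          ∏ i ∈ Finset.Icc 2 (k - 1), d i / (c i + d i)))) ∧
    Tendsto (fun n : ℕ =>
        ∏ k ∈ Finset.Icc 2 (K - 1),
          (β n k + n * ∑ i ∈ Finset.Icc (k + 1) K, r i) /
          (α n k + β n k + n * ∑ i ∈ Finset.Icc k K, r i))
      atTop (𝓝 (∏ k ∈ Finset.Icc 2 (K - 1), d k / (c k + d k))) := by
  have hng : Tendsto (fun n : ℕ => (n : ℝ) / g n) atTop (𝓝 0) := by
    refine hgn.inv_tendsto_atTop.congr fun n => ?_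
    simp only [Pi.inv_apply, inv_div]
  have hab : ∀ k ∈ Finset.Icc 2 (K - 1),
      Tendsto (fun n : ℕ => (α n k + β n k) / g n) atTop (𝓝 (c k + d k)) := fun k hk =>
    ((hclim k hk).add (hdlim k hk)).congr fun n => (add_div _ _ _).symm
  have hcd0 : ∀ k ∈ Finset.Icc 2 (K - 1), c k + d k ≠ 0 := fun k hk =>
    (add_pos (hc k hk) (hd k hk)).ne'
  have hfac : ∀ k ∈ Finset.Icc 2 (K - 1), ∀ S T : ℝ,
      Tendsto (fun n : ℕ => (β n k + n * S) / (α n k + β n k + n * T)) atTop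
        (𝓝 (d k / (c k + d k))) := fun k hk S T =>
    gd_aux _ _ g hg _ _ (hdlim k hk) (hab k hk) (hcd0 k hk) S T hng
  constructor
  · intro k hk
    have hmem : ∀ i ∈ Finset.Icc 2 (k - 1), i ∈ Finset.Icc 2 (K - 1) := by
      intro i hi
      simp only [Finset.mem_Icc] at hi hk ⊢
      omega
    refine Tendsto.mul
      (gd_aux _ _ g hg _ _ (hclim k hk) (hab k hk) (hcd0 k hk) _ _ hng) ?_
    exact tendsto_finset_prod _ fun i hi => hfac i (hmem i hi) _ _
  · exact tendsto_finset_prod _ fun k hk => hfac k hk _ _
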